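/- Let W be a bounded chain complex of R-modules concentrated in degrees [a, b] with each Wᵖ finitely generated. Then there exists a contractible bounded complex X of finitely generated free R-modules (a finite direct sum of disk complexes D(p) = (⋯ → 0 → R →^{id} R → 0 → ⋯)) together with a chain map g : X → W that is surjective in every degree in [a, b-1]. -/

import Mathlib

open CategoryTheory CategoryTheory.Limits

namespace Stmt11Aux

variable {R : Type} [CommRing R]

/-- The differential of the "disk sum" complex: `(x, y) ↦ (0, x)` (up to `Fin.cast`). -/
def dmap (n : ℤ → ℕ) (i j : ℤ) (e : n (j - 1) = n i) :
    ((Fin (n i) → R) × (Fin (n (i - 1)) → R)) →ₗ[R]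
      ((Fin (n j) → R) × (Fin (n (j - 1)) → R)) where
  toFun x := (0, fun k => x.1 (Fin.cast e k))
  map_add' x y := by ext k <;> simp
  map_smul' c x := by ext k <;> simp

/-- The contracting homotopy: `(x, y) ↦ (y, 0)` (up to `Fin.cast`). -/
def hmap (n : ℤ → ℕ) (i j : ℤ) (e : n j = n (i - 1)) :
    ((Fin (n i) → R) × (Fin (n (i - 1)) → R)) →ₗ[R]
      ((Fin (n j) → R) × (Fin (n (j - 1)) → R)) where
  toFun x := (fun k => x.2 (Fin.cast e k), 0)
  map_add' x y := by ext k <;> simp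
  map_smul' c x := by ext k <;> simp

variable (R) in
/-- The "sum of disks" contractible complex determined by a rank function `np`. -/
def Xc (np : ℤ → ℕ) : CochainComplex (ModuleCat.{0} R) ℤ where
  X n := ModuleCat.of R ((Fin (np n) → R) × (Fin (np (n - 1)) → R))
  d i j := if h : i + 1 = j then ModuleCat.ofHom (dmap np i j (by congr 1; omega)) else 0
  shape i j h := dif_neg h
  d_comp_d' := by
    rintro i j k (rfl : i + 1 = j) (rfl : _ = k)
    simp only [dif_pos rfl]
    apply ModuleCat.hom_ext
    apply LinearMap.ext
    rintro ⟨x, y⟩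
    show dmap np _ _ _ (dmap np _ _ _ (x, y)) = 0
    simp only [dmap, LinearMap.coe_mk, AddHom.coe_mk]
    rfl

lemma Xc_d (np : ℤ → ℕ) (i j : ℤ) (h : i + 1 = j) :
    (Xc R np).d i j = ModuleCat.ofHom (dmap np i j (by congr 1; omega)) :=
  dif_pos h

/-- The chain map to `W`: `(x, y) ↦ π n x + d (π (n-1) y)`. -/
def gmap (W : CochainComplex (ModuleCat.{0} R) ℤ) (np : ℤ → ℕ)
    (π : ∀ p : ℤ, (Fin (np p) → R) →ₗ[R] W.X p) (n : ℤ) :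
    ((Fin (np n) → R) × (Fin (np (n - 1)) → R)) →ₗ[R] W.X n where
  toFun x := π n x.1 + W.d (n - 1) n (π (n - 1) x.2)
  map_add' x y := by simp [map_add]; abel
  map_smul' c x := by simp

end Stmt11Aux

open Stmt11Aux in
/-- Let `W` be a bounded cochain complex of `R`-modules concentrated in degrees
`[a, b]` with each `Wᵖ` finitely generated. Then there exists a contractible
bounded complex `X` of finitely generated free `R`-modules together with a
chain map `g : X → W` that is surjective in every degree in `[a, b-1]`. -/
theorem stmt_11 (R : Type) [CommRing R] (a b : ℤ)
    (W : CochainComplex (ModuleCat.{0} R) ℤ)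
    (hWbd : ∀ p : ℤ, (p < a ∨ b < p) → IsZero (W.X p))
    (hWfg : ∀ p : ℤ, Module.Finite R (W.X p)) :
    ∃ (X : CochainComplex (ModuleCat.{0} R) ℤ) (g : X ⟶ W),
      (∀ p : ℤ, Module.Finite R (X.X p) ∧ Module.Free R (X.X p)) ∧
      (∀ p : ℤ, (p < a ∨ b + 1 < p) → IsZero (X.X p)) ∧
      Nonempty (Homotopy (𝟙 X) 0) ∧
      (∀ p : ℤ, a ≤ p → p ≤ b - 1 → Function.Surjective (g.f p)) := by
  have H : ∀ p : ℤ, ∃ (n : ℕ) (f : (Fin n → R) →ₗ[R] W.X p),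
      (a ≤ p → p ≤ b - 1 → Function.Surjective f) ∧ (¬(a ≤ p ∧ p ≤ b - 1) → n = 0) := by
    intro p
    by_cases h : a ≤ p ∧ p ≤ b - 1
    · haveI := hWfg p
      obtain ⟨n, f, hf⟩ := Module.Finite.exists_fin' R (W.X p)
      exact ⟨n, f, fun _ _ => hf, fun h' => absurd h h'⟩
    · exact ⟨0, 0, fun h1 h2 => absurd ⟨h1, h2⟩ h, fun _ => rfl⟩
  choose np π hπ hz using H
  -- collapsing transported generators
  have key : ∀ (m m' j : ℤ) (h : m' = m) (e : np m' = np m) (x : Fin (np m) → R),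
      W.d m' j (π m' fun k => x (Fin.cast e k)) = W.d m j (π m x) := by
    intro m m' j h e x
    subst h
    have : (fun k => x (Fin.cast e k)) = x :=
      funext fun k => congrArg x (Fin.ext (by simp))
    rw [this]
  refine ⟨Xc R np, ⟨{ f := fun n => ModuleCat.ofHom (gmap W np π n), comm' := ?_ }, ?_, ?_, ?_, ?_⟩⟩
  · rintro i j (rfl : i + 1 = j)
    rw [Xc_d np i (i + 1) rfl]
    apply ModuleCat.hom_ext
    apply LinearMap.ext
    rintro ⟨x, y⟩
    show W.d i (i + 1) (π i x + W.d (i - 1) i (π (i - 1) y)) =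
      π (i + 1) 0 + W.d (i + 1 - 1) (i + 1) (π (i + 1 - 1) fun k => x (Fin.cast _ k))
    have h2 : W.d i (i + 1) (W.d (i - 1) i (π (i - 1) y)) = 0 := by
      have h0 : W.d (i - 1) i ≫ W.d i (i + 1) = 0 := W.d_comp_d _ _ _
      calc W.d i (i + 1) (W.d (i - 1) i (π (i - 1) y))
          = (W.d (i - 1) i ≫ W.d i (i + 1)) (π (i - 1) y) := rfl
        _ = (0 : W.X (i - 1) ⟶ W.X (i + 1)) (π (i - 1) y) := by rw [h0]
        _ = 0 := rfl
    rw [map_add, h2, add_zero, map_zero, zero_add, key i (i + 1 - 1) (i + 1) (by omega)]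
  · intro p
    constructor
    · show Module.Finite R ((Fin (np p) → R) × (Fin (np (p - 1)) → R))
      infer_instance
    · show Module.Free R ((Fin (np p) → R) × (Fin (np (p - 1)) → R))
      infer_instance
  · intro p hp
    have h1 : np p = 0 := hz p (by omega)
    have h2 : np (p - 1) = 0 := hz (p - 1) (by omega)
    haveI e1 : IsEmpty (Fin (np p)) := by rw [h1]; infer_instance
    haveI e2 : IsEmpty (Fin (np (p - 1))) := by rw [h2]; infer_instance
    have hs : Subsingleton ((Fin (np p) → R) × (Fin (np (p - 1)) → R)) := by
      constructor
      rintro ⟨x, y⟩ ⟨x', y'⟩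
      exact Prod.ext (funext fun k => e1.elim k) (funext fun k => e2.elim k)
    exact @ModuleCat.isZero_of_subsingleton R _ ((Xc R np).X p) hs
  · refine ⟨{ hom := fun i j => if h : j + 1 = i then ModuleCat.ofHom (hmap np i j (by congr 1; omega)) else 0
              zero := fun i j h => dif_neg h
              comm := ?_ }⟩
    intro i
    have hni : (ComplexShape.up ℤ).Rel i (i + 1) := rfl
    have hpi : (ComplexShape.up ℤ).Rel (i - 1) i := by simp
    rw [dNext_eq _ hni, prevD_eq _ hpi]
    simp only [dif_pos rfl, dif_pos (show (i - 1) + 1 = i by omega), eq_self_iff_true,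
      dite_true, Xc_d np i (i + 1) rfl, Xc_d np (i - 1) i (by omega)]
    erw [dif_pos (rfl : i + 1 = i + 1), dif_pos (show (i - 1) + 1 = i by omega)]
    apply ModuleCat.hom_ext
    apply LinearMap.ext
    rintro ⟨x, y⟩
    show (x, y) = (hmap np (i + 1) i _ (dmap np i (i + 1) _ (x, y)) +
      dmap np (i - 1) i _ (hmap np i (i - 1) _ (x, y))) + 0
    rw [add_zero]
    simp only [dmap, hmap, LinearMap.coe_mk, AddHom.coe_mk, Prod.mk_add_mk]
    refine Prod.ext ?_ ?_
    · show x = (fun k => x (Fin.cast _ (Fin.cast _ k))) + 0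
      rw [add_zero]
      exact funext fun k => congrArg x (Fin.ext (by simp)).symm
    · show y = 0 + (fun k => y (Fin.cast _ (Fin.cast _ k)))
      rw [zero_add]
      exact funext fun k => congrArg y (Fin.ext (by simp)).symm
  · intro p h1 h2 w
    obtain ⟨x, hx⟩ := hπ p h1 h2 w
    refine ⟨(x, 0), ?_⟩
    show π p x + W.d (p - 1) p (π (p - 1) 0) = w
    rw [map_zero, map_zero, add_zero, hx]
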